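/- (Sliced inverse regression identification, Appendix proposition used for Theorem 5.1.) Let z̃ be a random vector in ℝ^p with E z̃ = 0 and E z̃ z̃' = I_p, and let Y = h(ψ̃_1'z̃, …, ψ̃_L'z̃) + ε satisfy the sufficiency condition that the conditional distribution of Y given z̃ depends on z̃ only through (ψ̃_1'z̃, …, ψ̃_L'z̃). Assume the linear design condition: for every b ∈ ℝ^p, E( b'z̃ | ψ̃_1'z̃, …, ψ̃_L'z̃ ) is an affine function of (ψ̃_1'z̃, …, ψ̃_L'z̃). Fix H ≥ max{L, 2}, let I_h = [F_y^{-1}((h−1)/H), F_y^{-1}(h/H)] (F_y the CDF of Y) so that P(Y ∈ I_h) = 1/H, and define Σ_{z|y} = (1/H) Σ_{h=1}^H E(z̃ | Y ∈ I_h) E(z̃ | Y ∈ I_h)'. Then each vector E(z̃ | Y ∈ I_h) lies in span{ψ̃_1, …, ψ̃_L}; hence the column space of Σ_{z|y} is contained in span{ψ̃_1, …, ψ̃_L}, and if Σ_{z|y} has rank L, then the span of the eigenvectors ξ_1, …, ξ_L of Σ_{z|y} corresponding to its L largest eigenvalues equals span{ψ̃_1, …, ψ̃_L}. -/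

import Mathlib

open MeasureTheory Matrix
open scoped BigOperators
open scoped RealInnerProductSpace
open scoped ENNReal

noncomputable section

lemma dot_sum_left' {p L : ℕ} (c : Fin L → ℝ) (ξ : Fin L → Fin p → ℝ) (w : Fin p → ℝ) :
    (∑ l, c l • ξ l) ⬝ᵥ w = ∑ l, c l * (ξ l ⬝ᵥ w) := by
  simp only [dotProduct, Finset.sum_apply, Pi.smul_apply, smul_eq_mul, Finset.sum_mul,
    Finset.mul_sum, mul_assoc]
  rw [Finset.sum_comm]



lemma mem_span_of_dot {p L : ℕ} (ψ : Fin L → Fin p → ℝ) (v : Fin p → ℝ)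
    (hv : ∀ b : Fin p → ℝ, (∀ l, ψ l ⬝ᵥ b = 0) → v ⬝ᵥ b = 0) :
    v ∈ Submodule.span ℝ (Set.range ψ) := by
  classical
  let ψ' : Fin L → EuclideanSpace ℝ (Fin p) := fun l => WithLp.toLp 2 (ψ l)
  let v' : EuclideanSpace ℝ (Fin p) := WithLp.toLp 2 v
  have hinner : ∀ x y : EuclideanSpace ℝ (Fin p), ⟪x, y⟫ = (x : Fin p → ℝ) ⬝ᵥ y := by
    intro x y
    simp [PiLp.inner_apply, RCLike.inner_apply, dotProduct, mul_comm]
  have key : v' ∈ Submodule.span ℝ (Set.range ψ') := by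
    rw [← Submodule.orthogonal_orthogonal (Submodule.span ℝ (Set.range ψ'))]
    rw [Submodule.mem_orthogonal]
    intro u hu
    have hul : ∀ l, ψ l ⬝ᵥ u = 0 := by
      intro l
      have := (Submodule.mem_orthogonal' _ _).1 hu (ψ' l)
        (Submodule.subset_span ⟨l, rfl⟩)
      rw [hinner, dotProduct_comm] at this
      exact this
    have h0 := hv (WithLp.ofLp u) hul
    rw [hinner, dotProduct_comm]
    exact h0
  rw [Submodule.mem_span_range_iff_exists_fun] at key ⊢
  obtain ⟨c, hc⟩ := key
  refine ⟨c, ?_⟩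
  have := congrArg WithLp.ofLp hc
  simpa [ψ', v'] using this

lemma li_of_orth {p L : ℕ} (ξ : Fin L → Fin p → ℝ) (hne : ∀ l, ξ l ≠ 0)
    (horth : ∀ l l', l ≠ l' → ξ l ⬝ᵥ ξ l' = 0) : LinearIndependent ℝ ξ := by
  classical
  rw [Fintype.linearIndependent_iff]
  intro c hc k
  have h1 : (∑ l, c l • ξ l) ⬝ᵥ ξ k = 0 := by rw [hc]; simp
  rw [dot_sum_left'] at h1
  have h2 : ∀ l ∈ Finset.univ, l ≠ k → c l * (ξ l ⬝ᵥ ξ k) = 0 := by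
    intro l _ hlk
    rw [horth l k hlk, mul_zero]
  rw [Finset.sum_eq_single_of_mem k (Finset.mem_univ k) h2, mul_eq_zero] at h1
  rcases h1 with h1 | h1
  · exact h1
  · exact absurd (dotProduct_self_eq_zero.1 h1) (hne k)

lemma sir_key {Ω : Type} [mΩ : MeasurableSpace Ω] (P : Measure Ω) [IsProbabilityMeasure P]
    {p L : ℕ} (z : Ω → Fin p → ℝ) (hz : Measurable z)
    (Y : Ω → ℝ) (hY : Measurable Y) (ψ : Fin L → Fin p → ℝ)
    (hmean : ∀ i, ∫ ω, z ω i ∂P = 0)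
    (hcov : ∀ i j, ∫ ω, z ω i * z ω j ∂P = (1 : Matrix (Fin p) (Fin p) ℝ) i j)
    (hsuff : ∀ s : Set ℝ, MeasurableSet s →
      P[Set.indicator (Y ⁻¹' s) (fun _ => (1 : ℝ)) |
          MeasurableSpace.comap z inferInstance]
        =ᵐ[P] P[Set.indicator (Y ⁻¹' s) (fun _ => (1 : ℝ)) |
          MeasurableSpace.comap (fun ω => fun l => ψ l ⬝ᵥ z ω) inferInstance])
    (hlin : ∀ bv : Fin p → ℝ, ∃ (a0 : ℝ) (a : Fin L → ℝ),
      P[(fun ω => bv ⬝ᵥ z ω) |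
          MeasurableSpace.comap (fun ω => fun l => ψ l ⬝ᵥ z ω) inferInstance]
        =ᵐ[P] fun ω => a0 + ∑ l, a l * (ψ l ⬝ᵥ z ω))
    (s : Set ℝ) (hs : MeasurableSet s)
    (b : Fin p → ℝ) (hb : ∀ l, ψ l ⬝ᵥ b = 0) :
    ∫ ω in Y ⁻¹' s, b ⬝ᵥ z ω ∂P = 0 := by
  classical
  have hzi : ∀ i, Measurable fun ω => z ω i := fun i => (measurable_pi_apply i).comp hz
  have hsqii : ∀ i, Integrable (fun ω => z ω i * z ω i) P := by
    intro i
    by_contra hni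
    have h1 : ∫ ω, z ω i * z ω i ∂P = 1 := by rw [hcov i i, Matrix.one_apply_eq]
    rw [integral_undef hni] at h1
    norm_num at h1
  have hmem2 : ∀ i, MemLp (fun ω => z ω i) 2 P := by
    intro i
    refine (memLp_two_iff_integrable_sq (hzi i).aestronglyMeasurable).2 ?_
    simpa [pow_two] using hsqii i
  have hmul : ∀ {f g : Ω → ℝ}, MemLp f 2 P → MemLp g 2 P →
      Integrable (fun ω => f ω * g ω) P := by
    intro f g hf hg
    have hpq : (1:ℝ≥0∞)/1 = 1/2 + 1/2 := by
      rw [div_one, one_div]; exact ENNReal.inv_two_add_inv_two.symm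
    have h1 : MemLp (g • f) 1 P := hf.smul hg
    rw [memLp_one_iff_integrable] at h1
    have h2 : (g • f) = fun ω => f ω * g ω := by
      funext ω; simp [mul_comm]
    rwa [h2] at h1
  have hmemD : ∀ u : Fin p → ℝ, MemLp (fun ω => u ⬝ᵥ z ω) 2 P := by
    intro u
    have h1 : (fun ω => u ⬝ᵥ z ω) = fun ω => ∑ i, u i * z ω i := by
      funext ω; simp [dotProduct]
    rw [h1]
    exact memLp_finset_sum _ (fun i _ => ((hmem2 i).const_mul (u i)))
  have hint2 : ∀ i j, Integrable (fun ω => z ω i * z ω j) P :=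
    fun i j => hmul (hmem2 i) (hmem2 j)
  have hBint : ∀ u : Fin p → ℝ, Integrable (fun ω => u ⬝ᵥ z ω) P :=
    fun u => (hmemD u).integrable one_le_two
  have hEB : ∀ u : Fin p → ℝ, ∫ ω, u ⬝ᵥ z ω ∂P = 0 := by
    intro u
    have h1 : (fun ω => u ⬝ᵥ z ω) = fun ω => ∑ i, u i * z ω i := by
      funext ω; simp [dotProduct]
    rw [h1, integral_finset_sum _ (fun i _ => ((hmem2 i).integrable one_le_two).const_mul (u i))]
    simp [integral_const_mul, hmean]
  have hEzD : ∀ (i : Fin p) (v : Fin p → ℝ), ∫ ω, z ω i * (v ⬝ᵥ z ω) ∂P = v i := by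
    intro i v
    have h1 : (fun ω => z ω i * (v ⬝ᵥ z ω)) = fun ω => ∑ j, v j * (z ω i * z ω j) := by
      funext ω
      simp only [dotProduct, Finset.mul_sum]
      exact Finset.sum_congr rfl fun j _ => by ring
    rw [h1, integral_finset_sum _ (fun j _ => (hint2 i j).const_mul (v j))]
    simp only [integral_const_mul, hcov, Matrix.one_apply]
    simp
  have hEprod : ∀ u v : Fin p → ℝ,
      ∫ ω, (u ⬝ᵥ z ω) * (v ⬝ᵥ z ω) ∂P = u ⬝ᵥ v := by
    intro u v
    have h1 : (fun ω => (u ⬝ᵥ z ω) * (v ⬝ᵥ z ω))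
        = fun ω => ∑ i, u i * (z ω i * (v ⬝ᵥ z ω)) := by
      funext ω
      simp only [dotProduct, Finset.sum_mul]
      exact Finset.sum_congr rfl fun i _ => by ring
    rw [h1, integral_finset_sum _
      (fun i _ => (hmul (hmem2 i) (hmemD v)).const_mul (u i))]
    simp only [integral_const_mul, hEzD]
    rfl
  have hκ : Measurable (fun ω => fun l => ψ l ⬝ᵥ z ω) := by
    refine measurable_pi_lambda _ (fun l => ?_)
    simp only [dotProduct]
    exact Finset.measurable_sum _ fun i _ => measurable_const.mul (hzi i)
  have hm1 : MeasurableSpace.comap (fun ω => fun l => ψ l ⬝ᵥ z ω) inferInstance ≤ mΩ :=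
    measurable_iff_comap_le.mp hκ
  have hm2 : MeasurableSpace.comap z inferInstance ≤ mΩ :=
    measurable_iff_comap_le.mp hz
  have hz_m2 : Measurable[MeasurableSpace.comap z inferInstance] z :=
    fun t ht => ⟨t, ht, rfl⟩
  have hκ_m1 : Measurable[MeasurableSpace.comap (fun ω => fun l => ψ l ⬝ᵥ z ω) inferInstance]
      (fun ω => fun l => ψ l ⬝ᵥ z ω) :=
    fun t ht => ⟨t, ht, rfl⟩
  have hB_m2 : StronglyMeasurable[MeasurableSpace.comap z inferInstance]
      (fun ω => b ⬝ᵥ z ω) := by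
    have hφ : Measurable (fun v : Fin p → ℝ => b ⬝ᵥ v) := by
      simp only [dotProduct]
      exact Finset.measurable_sum _ fun i _ => measurable_const.mul (measurable_pi_apply i)
    exact (hφ.comp hz_m2).stronglyMeasurable
  set g : Ω → ℝ := Set.indicator (Y ⁻¹' s) (fun _ => (1 : ℝ)) with hgdef
  have hsY : MeasurableSet (Y ⁻¹' s) := hY hs
  have hg_int : Integrable g P := (integrable_const (1:ℝ)).indicator hsY
  set B : Ω → ℝ := fun ω => b ⬝ᵥ z ω with hBdef
  have hB_int : Integrable B P := hBint b
  have hBg_int : Integrable (B * g) P := by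
    have h1 : Integrable (fun ω => g ω * B ω) P := by
      refine hB_int.bdd_mul (c := 1) (hg_int.aestronglyMeasurable) ?_
      refine Filter.Eventually.of_forall fun ω => ?_
      by_cases hω : ω ∈ Y ⁻¹' s <;> simp [hgdef, hω]
    have h2 : (fun ω => g ω * B ω) = B * g := by funext ω; simp [mul_comm]
    rwa [h2] at h1
  obtain ⟨a0, a, hA⟩ := hlin b
  set c : Fin p → ℝ := ∑ l, a l • ψ l with hcdef
  set A : Ω → ℝ := fun ω => a0 + ∑ l, a l * (ψ l ⬝ᵥ z ω) with hAdef
  have hAc : A = fun ω => a0 + c ⬝ᵥ z ω := by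
    funext ω; rw [hAdef, hcdef]; simp only [dot_sum_left']
  have hA2 : MemLp A 2 P := by
    rw [hAc]
    exact (memLp_const a0).add (hmemD c)
  have hA_int : Integrable A P := hA2.integrable one_le_two
  have hA_m1 : StronglyMeasurable[MeasurableSpace.comap
      (fun ω => fun l => ψ l ⬝ᵥ z ω) inferInstance] A := by
    have hφ : Measurable (fun y : Fin L → ℝ => a0 + ∑ l, a l * y l) :=
      measurable_const.add
        (Finset.measurable_sum _ fun l _ => measurable_const.mul (measurable_pi_apply l))
    exact (hφ.comp hκ_m1).stronglyMeasurable
  have hAB_int : Integrable (A * B) P := by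
    have h1 := hmul hA2 (hmemD b)
    have h2 : (fun ω => A ω * B ω) = A * B := rfl
    rwa [h2] at h1
  have hEAB : ∫ ω, (A * B) ω ∂P = 0 := by
    have h1 : (fun ω => (A * B) ω) = fun ω => a0 * B ω + (c ⬝ᵥ z ω) * (b ⬝ᵥ z ω) := by
      funext ω; simp only [Pi.mul_apply]; rw [hAc]; ring
    rw [show (∫ ω, (A * B) ω ∂P) = ∫ ω, a0 * B ω + (c ⬝ᵥ z ω) * (b ⬝ᵥ z ω) ∂P from by
      rw [← h1],
      integral_add (hB_int.const_mul a0) (hmul (hmemD c) (hmemD b)),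
      integral_const_mul, hEprod c b, hcdef, dot_sum_left']
    have : (∫ ω, B ω ∂P) = 0 := hEB b
    rw [this]
    simp [hb]
  have hA0 : A =ᵐ[P] 0 := by
    have pullA : P[A * B | MeasurableSpace.comap (fun ω => fun l => ψ l ⬝ᵥ z ω) inferInstance]
        =ᵐ[P] A * P[B | MeasurableSpace.comap (fun ω => fun l => ψ l ⬝ᵥ z ω) inferInstance] :=
      condExp_mul_of_stronglyMeasurable_left hA_m1 hAB_int hB_int
    have e1 : ∫ ω, A ω * A ω ∂P
        = ∫ ω, (A * P[B | MeasurableSpace.comap (fun ω => fun l => ψ l ⬝ᵥ z ω) inferInstance]) ω ∂P := by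
      refine integral_congr_ae ?_
      filter_upwards [hA] with ω hω
      simp only [Pi.mul_apply]
      rw [hω]
    have e2 : ∫ ω, (A * P[B | MeasurableSpace.comap (fun ω => fun l => ψ l ⬝ᵥ z ω) inferInstance]) ω ∂P
        = ∫ ω, (A * B) ω ∂P :=
      (integral_congr_ae pullA).symm.trans (integral_condExp hm1)
    have hAA0 : ∫ ω, A ω * A ω ∂P = 0 := by rw [e1, e2, hEAB]
    have hAAint : Integrable (fun ω => A ω * A ω) P := hmul hA2 hA2
    have h3 := (integral_eq_zero_iff_of_nonneg
      (fun ω => mul_self_nonneg (A ω)) hAAint).1 hAA0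
    filter_upwards [h3] with ω hω
    exact mul_self_eq_zero.1 hω
  have hcondB0 : P[B | MeasurableSpace.comap (fun ω => fun l => ψ l ⬝ᵥ z ω) inferInstance]
      =ᵐ[P] 0 := hA.trans hA0
  set g1 : Ω → ℝ :=
    P[g | MeasurableSpace.comap (fun ω => fun l => ψ l ⬝ᵥ z ω) inferInstance] with hg1def
  have hg1_sm : StronglyMeasurable[MeasurableSpace.comap
      (fun ω => fun l => ψ l ⬝ᵥ z ω) inferInstance] g1 := stronglyMeasurable_condExp
  have hg1_aesm : AEStronglyMeasurable g1 P :=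
    ((hg1_sm.mono hm1).aestronglyMeasurable : AEStronglyMeasurable g1 P)
  have hg1_bdd : ∀ᵐ ω ∂P, ‖g1 ω‖ ≤ 1 := by
    have h0 : (0 : Ω → ℝ) ≤ᵐ[P] g1 :=
      condExp_nonneg (Filter.Eventually.of_forall fun ω => Set.indicator_nonneg
        (fun _ _ => zero_le_one) ω)
    have h1 : g1 ≤ᵐ[P]
        P[(fun _ => (1:ℝ)) | MeasurableSpace.comap (fun ω => fun l => ψ l ⬝ᵥ z ω) inferInstance] := by
      refine condExp_mono hg_int (integrable_const 1) ?_
      refine Filter.Eventually.of_forall fun ω => ?_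
      by_cases hω : ω ∈ Y ⁻¹' s <;> simp [hgdef, hω]
    have hc1 : P[(fun _ => (1:ℝ)) | MeasurableSpace.comap
        (fun ω => fun l => ψ l ⬝ᵥ z ω) inferInstance] = fun _ => (1:ℝ) :=
      condExp_const hm1 1
    rw [hc1] at h1
    filter_upwards [h0, h1] with ω hω0 hω1
    rw [Real.norm_eq_abs, abs_le]
    simp only [Pi.zero_apply] at hω0
    exact ⟨by linarith, hω1⟩
  have hg1B_int : Integrable (g1 * B) P := by
    have h1 : Integrable (fun ω => g1 ω * B ω) P := hB_int.bdd_mul hg1_aesm hg1_bdd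
    exact h1
  have step0 : ∫ ω in Y ⁻¹' s, b ⬝ᵥ z ω ∂P = ∫ ω, (B * g) ω ∂P := by
    rw [← integral_indicator hsY]
    refine integral_congr_ae (Filter.Eventually.of_forall fun ω => ?_)
    by_cases hω : ω ∈ Y ⁻¹' s <;> simp [hgdef, hω, hBdef]
  have pullBg : P[B * g | MeasurableSpace.comap z inferInstance]
      =ᵐ[P] B * P[g | MeasurableSpace.comap z inferInstance] :=
    condExp_mul_of_stronglyMeasurable_left hB_m2 hBg_int hg_int
  have step1 : ∫ ω, (B * g) ω ∂P
      = ∫ ω, (B * P[g | MeasurableSpace.comap z inferInstance]) ω ∂P :=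
    (integral_condExp hm2 (f := B * g)).symm.trans (integral_congr_ae pullBg)
  have step2 : ∫ ω, (B * P[g | MeasurableSpace.comap z inferInstance]) ω ∂P
      = ∫ ω, (g1 * B) ω ∂P := by
    refine integral_congr_ae ?_
    filter_upwards [hsuff s hs] with ω hω
    simp only [Pi.mul_apply]
    rw [← hgdef] at hω
    rw [hω, hg1def, mul_comm]
  have pullg1B : P[g1 * B | MeasurableSpace.comap (fun ω => fun l => ψ l ⬝ᵥ z ω) inferInstance]
      =ᵐ[P] g1 * P[B | MeasurableSpace.comap (fun ω => fun l => ψ l ⬝ᵥ z ω) inferInstance] :=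
    condExp_mul_of_stronglyMeasurable_left hg1_sm hg1B_int hB_int
  have step3 : ∫ ω, (g1 * B) ω ∂P
      = ∫ ω, (g1 * P[B | MeasurableSpace.comap (fun ω => fun l => ψ l ⬝ᵥ z ω) inferInstance]) ω ∂P :=
    (integral_condExp hm1 (f := g1 * B)).symm.trans (integral_congr_ae pullg1B)
  have step4 : ∫ ω, (g1 * P[B | MeasurableSpace.comap
      (fun ω => fun l => ψ l ⬝ᵥ z ω) inferInstance]) ω ∂P = 0 := by
    have h5 : (g1 * P[B | MeasurableSpace.comap (fun ω => fun l => ψ l ⬝ᵥ z ω) inferInstance])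
        =ᵐ[P] 0 := by
      filter_upwards [hcondB0] with ω hω
      simp only [Pi.mul_apply, hω, Pi.zero_apply, mul_zero]
    rw [integral_congr_ae h5]
    simp
  rw [step0, step1, step2, step3, step4]


/-- **Sliced inverse regression identification (Appendix proposition for Theorem 5.1).**
Let `z̃` be a standardized random vector (`E z̃ = 0`, `E z̃ z̃' = I_p`) and
`Y = h(ψ̃₁'z̃, …, ψ̃_L'z̃) + ε`, where the conditional distribution of `Y` given `z̃`
depends on `z̃` only through the indices, and suppose the linear design condition holds.
Divide the range of `Y` into `H ≥ max{L,2}` interval slices of probability `1/H` each,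
and let `Σ_{z|y} = H⁻¹ Σ_h E(z̃|Y∈I_h)E(z̃|Y∈I_h)'`.  Then every slice mean
`E(z̃|Y∈I_h)` lies in `span{ψ̃₁,…,ψ̃_L}`; hence the column space of `Σ_{z|y}` is contained
in that span; and if `Σ_{z|y}` has rank `L`, the span of the eigenvectors of `Σ_{z|y}`
corresponding to its `L` largest (equivalently, nonzero) eigenvalues equals
`span{ψ̃₁,…,ψ̃_L}`. -/
theorem sliced_inverse_regression
    {Ω : Type} [MeasurableSpace Ω] (P : Measure Ω) [IsProbabilityMeasure P]
    (p L H : ℕ) (hL : 0 < L) (hH : max L 2 ≤ H)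
    (z : Ω → Fin p → ℝ) (hz : Measurable z)
    (Y : Ω → ℝ) (hY : Measurable Y)
    (ψ : Fin L → Fin p → ℝ)
    (h : (Fin L → ℝ) → ℝ) (ε : Ω → ℝ)
    (hmodel : ∀ ω, Y ω = h (fun l => ψ l ⬝ᵥ z ω) + ε ω)
    -- standardization: E z̃ = 0 and E z̃ z̃' = I
    (hmean : ∀ i, ∫ ω, z ω i ∂P = 0)
    (hcov : ∀ i j, ∫ ω, z ω i * z ω j ∂P = (1 : Matrix (Fin p) (Fin p) ℝ) i j)
    -- sufficiency: the conditional distribution of Y given z̃ depends on z̃ only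
    -- through the indices (ψ̃₁'z̃, …, ψ̃_L'z̃)
    (hsuff : ∀ s : Set ℝ, MeasurableSet s →
      P[Set.indicator (Y ⁻¹' s) (fun _ => (1 : ℝ)) |
          MeasurableSpace.comap z inferInstance]
        =ᵐ[P] P[Set.indicator (Y ⁻¹' s) (fun _ => (1 : ℝ)) |
          MeasurableSpace.comap (fun ω => fun l => ψ l ⬝ᵥ z ω) inferInstance])
    -- linear design condition: E(b'z̃ | ψ̃₁'z̃, …, ψ̃_L'z̃) is affine in the indices
    (hlin : ∀ bv : Fin p → ℝ, ∃ (a0 : ℝ) (a : Fin L → ℝ),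
      P[(fun ω => bv ⬝ᵥ z ω) |
          MeasurableSpace.comap (fun ω => fun l => ψ l ⬝ᵥ z ω) inferInstance]
        =ᵐ[P] fun ω => a0 + ∑ l, a l * (ψ l ⬝ᵥ z ω))
    -- the interval slices, each of probability 1/H
    (Ih : Fin H → Set ℝ) (aI bI : Fin H → ℝ)
    (hIcc : ∀ h', Ih h' = Set.Icc (aI h') (bI h'))
    (hprob : ∀ h', (P (Y ⁻¹' Ih h')).toReal = 1 / H)
    -- the slice means E(z̃ | Y ∈ I_h) = H ∫_{Y ∈ I_h} z̃ dP
    (mh : Fin H → Fin p → ℝ)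
    (hmh : ∀ h' i, mh h' i = (H : ℝ) * ∫ ω in Y ⁻¹' Ih h', z ω i ∂P)
    -- the sliced covariance matrix
    (Sigzy : Matrix (Fin p) (Fin p) ℝ)
    (hSig : Sigzy = (H : ℝ)⁻¹ • ∑ h', Matrix.vecMulVec (mh h') (mh h')) :
    -- (1) each slice mean lies in span{ψ̃₁,…,ψ̃_L}
    (∀ h', mh h' ∈ Submodule.span ℝ (Set.range ψ)) ∧
    -- (2) the column space of Σ_{z|y} is contained in span{ψ̃₁,…,ψ̃_L}
    (∀ v : Fin p → ℝ, Sigzy *ᵥ v ∈ Submodule.span ℝ (Set.range ψ)) ∧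
    -- (3) if rank Σ_{z|y} = L, eigenvectors for the L largest (nonzero) eigenvalues
    --     span exactly span{ψ̃₁,…,ψ̃_L}
    (Sigzy.rank = L →
      ∀ (ξ : Fin L → Fin p → ℝ) (μ : Fin L → ℝ),
        (∀ l, Sigzy *ᵥ ξ l = μ l • ξ l) →
        (∀ l, ξ l ≠ 0) → (∀ l, μ l ≠ 0) →
        (∀ l l', l ≠ l' → ξ l ⬝ᵥ ξ l' = 0) →
        Submodule.span ℝ (Set.range ξ) = Submodule.span ℝ (Set.range ψ)) := by
    classical
  -- integrability of coordinates
  have hzi : ∀ i, Measurable fun ω => z ω i := fun i => (measurable_pi_apply i).comp hz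
  have hsqii : ∀ i, Integrable (fun ω => z ω i * z ω i) P := by
    intro i
    by_contra hni
    have h1 : ∫ ω, z ω i * z ω i ∂P = 1 := by rw [hcov i i, Matrix.one_apply_eq]
    rw [integral_undef hni] at h1
    norm_num at h1
  have hmem2 : ∀ i, MemLp (fun ω => z ω i) 2 P := by
    intro i
    refine (memLp_two_iff_integrable_sq (hzi i).aestronglyMeasurable).2 ?_
    simpa [pow_two] using hsqii i
  have hzint : ∀ i, Integrable (fun ω => z ω i) P :=
    fun i => (hmem2 i).integrable one_le_two
  have hSmeas : ∀ h' : Fin H, MeasurableSet (Ih h') := by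
    intro h'; rw [hIcc]; exact measurableSet_Icc
  -- (1) every slice mean lies in the span
  have part1 : ∀ h', mh h' ∈ Submodule.span ℝ (Set.range ψ) := by
    intro h'
    refine mem_span_of_dot ψ (mh h') ?_
    intro b hb
    have hkey := sir_key P z hz Y hY ψ hmean hcov hsuff hlin (Ih h') (hSmeas h') b hb
    have hsum : ∫ ω in Y ⁻¹' Ih h', b ⬝ᵥ z ω ∂P
        = ∑ i, b i * ∫ ω in Y ⁻¹' Ih h', z ω i ∂P := by
      have h1 : (fun ω => b ⬝ᵥ z ω) = fun ω => ∑ i, b i * z ω i := by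
        funext ω; simp [dotProduct]
      rw [h1, integral_finset_sum _ (fun i _ => ((hzint i).integrableOn.const_mul (b i)))]
      simp [integral_const_mul]
    have e : mh h' ⬝ᵥ b = (H : ℝ) * ∫ ω in Y ⁻¹' Ih h', b ⬝ᵥ z ω ∂P := by
      rw [hsum, Finset.mul_sum]
      simp only [dotProduct]
      refine Finset.sum_congr rfl fun i _ => ?_
      rw [hmh h' i]; ring
    rw [hkey, mul_zero] at e
    exact e
  refine ⟨part1, ?_, ?_⟩
  -- (2) the column space is contained in the span
  · have part2 : ∀ v : Fin p → ℝ, Sigzy *ᵥ v ∈ Submodule.span ℝ (Set.range ψ) := by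
      intro v
      have hSv : Sigzy *ᵥ v = (H : ℝ)⁻¹ • ∑ h', (mh h' ⬝ᵥ v) • mh h' := by
        rw [hSig]
        funext i
        simp only [Matrix.mulVec, dotProduct, Matrix.smul_apply, Matrix.sum_apply,
          Matrix.vecMulVec_apply, Pi.smul_apply, Finset.sum_apply, smul_eq_mul,
          Finset.sum_mul, Finset.mul_sum]
        rw [Finset.sum_comm]
        exact Finset.sum_congr rfl fun h' _ => Finset.sum_congr rfl fun j _ => by ring
      rw [hSv]
      exact Submodule.smul_mem _ _ (Submodule.sum_mem _ fun h' _ =>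
        Submodule.smul_mem _ _ (part1 h'))
    exact part2
  -- (3) eigenvectors with nonzero eigenvalues span exactly the span
  · intro _hrank ξ μ heig hne hμ horth
    have part2 : ∀ v : Fin p → ℝ, Sigzy *ᵥ v ∈ Submodule.span ℝ (Set.range ψ) := by
      intro v
      have hSv : Sigzy *ᵥ v = (H : ℝ)⁻¹ • ∑ h', (mh h' ⬝ᵥ v) • mh h' := by
        rw [hSig]
        funext i
        simp only [Matrix.mulVec, dotProduct, Matrix.smul_apply, Matrix.sum_apply,
          Matrix.vecMulVec_apply, Pi.smul_apply, Finset.sum_apply, smul_eq_mul,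
          Finset.sum_mul, Finset.mul_sum]
        rw [Finset.sum_comm]
        exact Finset.sum_congr rfl fun h' _ => Finset.sum_congr rfl fun j _ => by ring
      rw [hSv]
      exact Submodule.smul_mem _ _ (Submodule.sum_mem _ fun h' _ =>
        Submodule.smul_mem _ _ (part1 h'))
    have hle : Submodule.span ℝ (Set.range ξ) ≤ Submodule.span ℝ (Set.range ψ) := by
      rw [Submodule.span_le]
      rintro _ ⟨l, rfl⟩
      have hξl : ξ l = (μ l)⁻¹ • (Sigzy *ᵥ ξ l) := by
        rw [heig l, smul_smul, inv_mul_cancel₀ (hμ l), one_smul]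
      rw [hξl]
      exact Submodule.smul_mem _ _ (part2 (ξ l))
    have hli : LinearIndependent ℝ ξ := li_of_orth ξ hne horth
    have h1 : Module.finrank ℝ (Submodule.span ℝ (Set.range ξ)) = L := by
      rw [finrank_span_eq_card hli, Fintype.card_fin]
    have h2 : Module.finrank ℝ (Submodule.span ℝ (Set.range ψ)) ≤ L := by
      simpa [Set.finrank, Fintype.card_fin] using finrank_range_le_card (R := ℝ) ψ
    exact Submodule.eq_of_le_of_finrank_le hle (by rw [h1]; exact h2)
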